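/- For every ε > 0 there exists a constant M > 0 (depending only on ε) such that for all continuously differentiable, compactly supported u, u₂ : ℝ² → ℝ² and every continuous, compactly supported C : ℝ² → ℝ, |∫_{ℝ²} C(x) (u₂(x) · u(x)) dx| ≤ M ‖C‖_{L²}² + ε ‖∇u‖_{L²}² + M ‖u₂‖_{L²}² ‖∇u₂‖_{L²}² ‖u‖_{L²}². -/

import Mathlib

open MeasureTheory

open scoped ENNReal NNReal

/-- The `i`-th partial derivative of a scalar function on `ℝ²`. -/
noncomputable def pderiv2 (f : (Fin 2 → ℝ) → ℝ) (i : Fin 2) (x : Fin 2 → ℝ) : ℝ :=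
  fderiv ℝ f x (Pi.single i 1)

lemma opnorm_sq_le (L : (Fin 2 → ℝ) →L[ℝ] ℝ) :
    ‖L‖ ^ 2 ≤ 2 * ∑ j, (L (Pi.single j 1)) ^ 2 := by
  have h : ‖L‖ ≤ |L (Pi.single 0 1)| + |L (Pi.single 1 1)| := by
    refine L.opNorm_le_bound (by positivity) fun x => ?_
    have hx : L x = x 0 * L (Pi.single 0 1) + x 1 * L (Pi.single 1 1) := by
      have hx0 : x = ∑ i, Pi.single i (x i) := (Finset.univ_sum_single x).symm
      have hs : ∀ i : Fin 2, Pi.single i (x i) = x i • (Pi.single i 1 : Fin 2 → ℝ) := by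
        intro i; rw [← Pi.single_smul, smul_eq_mul, mul_one]
      conv_lhs => rw [hx0]
      rw [map_sum, Fin.sum_univ_two, hs 0, hs 1, _root_.map_smul, _root_.map_smul]
      simp [smul_eq_mul]
    rw [Real.norm_eq_abs, hx]
    have h0 : |x 0| ≤ ‖x‖ := by simpa using norm_le_pi_norm x 0
    have h1 : |x 1| ≤ ‖x‖ := by simpa using norm_le_pi_norm x 1
    calc |x 0 * L (Pi.single 0 1) + x 1 * L (Pi.single 1 1)|
        ≤ |x 0 * L (Pi.single 0 1)| + |x 1 * L (Pi.single 1 1)| := abs_add_le _ _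
      _ ≤ ‖x‖ * |L (Pi.single 0 1)| + ‖x‖ * |L (Pi.single 1 1)| := by
          rw [abs_mul, abs_mul]; gcongr
      _ = (|L (Pi.single 0 1)| + |L (Pi.single 1 1)|) * ‖x‖ := by ring
  rw [Fin.sum_univ_two]
  nlinarith [norm_nonneg L, abs_nonneg (L (Pi.single 0 1)), abs_nonneg (L (Pi.single 1 1)),
    sq_abs (L (Pi.single 0 1)), sq_abs (L (Pi.single 1 1)),
    sq_nonneg (|L (Pi.single 0 1)| - |L (Pi.single 1 1)|)]

lemma pderiv2_cont {f : (Fin 2 → ℝ) → ℝ} (hf : ContDiff ℝ 1 f) (i : Fin 2) :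
    Continuous (pderiv2 f i) :=
  (hf.continuous_fderiv one_ne_zero).clm_apply continuous_const

lemma pderiv2_hcs {f : (Fin 2 → ℝ) → ℝ} (h2f : HasCompactSupport f) (i : Fin 2) :
    HasCompactSupport (pderiv2 f i) :=
  h2f.fderiv_apply ℝ (Pi.single i 1)

lemma G_cont {f : (Fin 2 → ℝ) → ℝ} (hf : ContDiff ℝ 1 f) :
    Continuous (fun x => ∑ j, (pderiv2 f j x) ^ 2) := by
  exact continuous_finset_sum _ fun j _ => (pderiv2_cont hf j).pow 2

lemma G_hcs {f : (Fin 2 → ℝ) → ℝ} (h2f : HasCompactSupport f) :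
    HasCompactSupport (fun x => ∑ j, (pderiv2 f j x) ^ 2) := by
  have : (fun x => ∑ j, (pderiv2 f j x) ^ 2) =
      (fun x => (pderiv2 f 0 x) ^ 2 + (pderiv2 f 1 x) ^ 2) := by
    funext x; rw [Fin.sum_univ_two]
  rw [this]
  exact ((pderiv2_hcs h2f 0).comp_left (g := fun t : ℝ => t ^ 2) (by simp)).add
    ((pderiv2_hcs h2f 1).comp_left (g := fun t : ℝ => t ^ 2) (by simp))

lemma lady : ∃ K : ℝ, 0 < K ∧ ∀ f : (Fin 2 → ℝ) → ℝ, ContDiff ℝ 1 f → HasCompactSupport f →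
    ∫ x, (f x) ^ 4 ≤ K * (∫ x, (f x) ^ 2) * (∫ x, ∑ j, (pderiv2 f j x) ^ 2) := by
  set C₀ : ℝ≥0 := MeasureTheory.lintegralPowLePowLIntegralFDerivConst
    (volume : Measure (Fin 2 → ℝ)) 2 with hC₀def
  refine ⟨8 * C₀ + 1, by positivity, fun f hf h2f => ?_⟩
  have hfc := hf.continuous
  have hf' : Continuous (fderiv ℝ f) := hf.continuous_fderiv one_ne_zero
  -- integrability
  have hint4 : Integrable (fun x => (f x) ^ 4) :=
by
    have h1 : HasCompactSupport (fun x => (f x) ^ 4) := h2f.comp_left (g := fun t : ℝ => t ^ 4) (by simp)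
    exact (hfc.pow 4).integrable_of_hasCompactSupport h1
  have hint2 : Integrable (fun x => (f x) ^ 2) :=
by
    have h1 : HasCompactSupport (fun x => (f x) ^ 2) := h2f.comp_left (g := fun t : ℝ => t ^ 2) (by simp)
    exact (hfc.pow 2).integrable_of_hasCompactSupport h1
  have hintG : Integrable (fun x => ∑ j, (pderiv2 f j x) ^ 2) :=
    (G_cont hf).integrable_of_hasCompactSupport (G_hcs h2f)
  -- Sobolev inequality for g = f * f
  set g : (Fin 2 → ℝ) → ℝ := fun x => f x * f x with hg_def
  have hg : ContDiff ℝ 1 g := hf.mul hf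
  have h2g : HasCompactSupport g := h2f.mul_left
  have hp : Real.HolderConjugate (Module.finrank ℝ (Fin 2 → ℝ)) 2 := by
    have h : (Module.finrank ℝ (Fin 2 → ℝ) : ℝ) = 2 := by
      simp [Module.finrank_fintype_fun_eq_card]
    rw [h]; exact Real.HolderConjugate.two_two
  have key := MeasureTheory.lintegral_pow_le_pow_lintegral_fderiv
    (volume : Measure (Fin 2 → ℝ)) hg h2g hp
  rw [← hC₀def] at key
  -- abbreviations
  set A : ℝ≥0∞ := ∫⁻ x, (‖f x‖₊ : ℝ≥0∞) ^ (2 : ℝ) with hAdef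
  set B : ℝ≥0∞ := ∫⁻ x, (‖fderiv ℝ f x‖₊ : ℝ≥0∞) ^ (2 : ℝ) with hBdef
  -- LHS of key equals ofReal (∫ f⁴)
  have hL : (∫⁻ x, (‖g x‖₊ : ℝ≥0∞) ^ (2 : ℝ)) = ENNReal.ofReal (∫ x, (f x) ^ 4) := by
    rw [ofReal_integral_eq_lintegral_ofReal hint4 (ae_of_all _ fun x => by positivity)]
    refine lintegral_congr fun x => ?_
    rw [← enorm_eq_nnnorm, ← ofReal_norm,
      ENNReal.ofReal_rpow_of_nonneg (norm_nonneg _) (by norm_num)]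
    congr 1
    rw [Real.norm_of_nonneg (mul_self_nonneg _),
      show (2 : ℝ) = ((2 : ℕ) : ℝ) by norm_num, Real.rpow_natCast]
    ring
  -- A equals ofReal (∫ f²)
  have hA : A = ENNReal.ofReal (∫ x, (f x) ^ 2) := by
    rw [ofReal_integral_eq_lintegral_ofReal hint2 (ae_of_all _ fun x => by positivity)]
    refine lintegral_congr fun x => ?_
    rw [← enorm_eq_nnnorm, ← ofReal_norm,
      ENNReal.ofReal_rpow_of_nonneg (norm_nonneg _) (by norm_num)]
    congr 1
    rw [show (2 : ℝ) = ((2 : ℕ) : ℝ) by norm_num, Real.rpow_natCast, Real.norm_eq_abs, sq_abs]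
  -- B is bounded by ofReal (2 * ∫ G)
  have hB : B ≤ ENNReal.ofReal (2 * ∫ x, ∑ j, (pderiv2 f j x) ^ 2) := by
    have h2int : Integrable (fun x => 2 * ∑ j, (pderiv2 f j x) ^ 2) := hintG.const_mul 2
    rw [← integral_const_mul,
      ofReal_integral_eq_lintegral_ofReal h2int (ae_of_all _ fun x => by positivity)]
    refine lintegral_mono fun x => ?_
    rw [← enorm_eq_nnnorm, ← ofReal_norm,
      ENNReal.ofReal_rpow_of_nonneg (norm_nonneg _) (by norm_num)]
    apply ENNReal.ofReal_le_ofReal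
    rw [show (2 : ℝ) = ((2 : ℕ) : ℝ) by norm_num, Real.rpow_natCast]
    simpa [pderiv2] using opnorm_sq_le (fderiv ℝ f x)
  -- Hölder on the derivative term
  have hD : (∫⁻ x, (‖fderiv ℝ g x‖₊ : ℝ≥0∞)) ≤
      2 * (A ^ (1 / 2 : ℝ) * B ^ (1 / 2 : ℝ)) := by
    have hpt : ∀ x, (‖fderiv ℝ g x‖₊ : ℝ≥0∞) ≤
        2 * ((‖f x‖₊ : ℝ≥0∞) * (‖fderiv ℝ f x‖₊ : ℝ≥0∞)) := by
      intro x
      have hd := (hf.differentiable one_ne_zero) x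
      have hmul : fderiv ℝ g x = f x • fderiv ℝ f x + f x • fderiv ℝ f x :=
        fderiv_mul hd hd
      calc (‖fderiv ℝ g x‖₊ : ℝ≥0∞) ≤
          (‖f x • fderiv ℝ f x‖₊ : ℝ≥0∞) + (‖f x • fderiv ℝ f x‖₊ : ℝ≥0∞) := by
            rw [hmul]; exact_mod_cast nnnorm_add_le _ _
        _ = 2 * ((‖f x‖₊ : ℝ≥0∞) * (‖fderiv ℝ f x‖₊ : ℝ≥0∞)) := by
            rw [nnnorm_smul]; push_cast; ring
    calc (∫⁻ x, (‖fderiv ℝ g x‖₊ : ℝ≥0∞))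
        ≤ ∫⁻ x, 2 * ((‖f x‖₊ : ℝ≥0∞) * (‖fderiv ℝ f x‖₊ : ℝ≥0∞)) := lintegral_mono hpt
      _ = 2 * ∫⁻ x, (‖f x‖₊ : ℝ≥0∞) * (‖fderiv ℝ f x‖₊ : ℝ≥0∞) :=
          lintegral_const_mul' _ _ (by norm_num)
      _ ≤ 2 * (A ^ (1 / 2 : ℝ) * B ^ (1 / 2 : ℝ)) := by
          gcongr
          exact ENNReal.lintegral_mul_le_Lp_mul_Lq volume Real.HolderConjugate.two_two
            hfc.nnnorm.aemeasurable.coe_nnreal_ennreal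
            hf'.nnnorm.aemeasurable.coe_nnreal_ennreal
  -- square hD
  have hD2 : (∫⁻ x, (‖fderiv ℝ g x‖₊ : ℝ≥0∞)) ^ (2 : ℝ) ≤ 4 * (A * B) := by
    calc (∫⁻ x, (‖fderiv ℝ g x‖₊ : ℝ≥0∞)) ^ (2 : ℝ)
        ≤ (2 * (A ^ (1 / 2 : ℝ) * B ^ (1 / 2 : ℝ))) ^ (2 : ℝ) :=
          ENNReal.rpow_le_rpow hD (by norm_num)
      _ = 4 * (A * B) := by
          rw [ENNReal.mul_rpow_of_nonneg _ _ (by norm_num),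
            ENNReal.mul_rpow_of_nonneg _ _ (by norm_num),
            ← ENNReal.rpow_mul, ← ENNReal.rpow_mul, ENNReal.rpow_two]
          norm_num [ENNReal.rpow_one]
  have hintGnn : 0 ≤ ∫ x, ∑ j, (pderiv2 f j x) ^ 2 :=
    integral_nonneg fun x => by positivity
  have hint2nn : 0 ≤ ∫ x, (f x) ^ 2 := integral_nonneg fun x => by positivity
  have final : ENNReal.ofReal (∫ x, (f x) ^ 4) ≤
      ENNReal.ofReal ((8 * C₀ + 1) * (∫ x, (f x) ^ 2) * (∫ x, ∑ j, (pderiv2 f j x) ^ 2)) := by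
    rw [← hL]
    calc (∫⁻ x, (‖g x‖₊ : ℝ≥0∞) ^ (2 : ℝ))
        ≤ C₀ * (∫⁻ x, (‖fderiv ℝ g x‖₊ : ℝ≥0∞)) ^ (2 : ℝ) := key
      _ ≤ C₀ * (4 * (A * B)) := mul_le_mul_right hD2 _
      _ ≤ C₀ * (4 * (ENNReal.ofReal (∫ x, (f x) ^ 2) *
            ENNReal.ofReal (2 * ∫ x, ∑ j, (pderiv2 f j x) ^ 2))) := by
          rw [← hA]; gcongr
      _ = ENNReal.ofReal ((C₀ : ℝ) * (4 * ((∫ x, (f x) ^ 2) *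
            (2 * ∫ x, ∑ j, (pderiv2 f j x) ^ 2)))) := by
          rw [ENNReal.ofReal_mul C₀.coe_nonneg, ENNReal.ofReal_mul (by norm_num : (0:ℝ) ≤ 4),
            ENNReal.ofReal_mul hint2nn, ENNReal.ofReal_coe_nnreal, ENNReal.ofReal_ofNat]
      _ ≤ ENNReal.ofReal ((8 * C₀ + 1) * (∫ x, (f x) ^ 2) *
            (∫ x, ∑ j, (pderiv2 f j x) ^ 2)) := by
          apply ENNReal.ofReal_le_ofReal
          nlinarith [C₀.coe_nonneg, mul_nonneg hint2nn hintGnn]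
  have hrhs : 0 ≤ (8 * (C₀ : ℝ) + 1) * (∫ x, (f x) ^ 2) * (∫ x, ∑ j, (pderiv2 f j x) ^ 2) := by
    positivity
  exact (ENNReal.ofReal_le_ofReal_iff hrhs).mp final

lemma sumsq_cont {v : (Fin 2 → ℝ) → (Fin 2 → ℝ)} (hv : ContDiff ℝ 1 v) :
    Continuous fun x => ∑ i, (v x i) ^ 2 :=
  continuous_finset_sum _ fun i _ => ((continuous_apply i).comp hv.continuous).pow 2

lemma sumsq_hcs {v : (Fin 2 → ℝ) → (Fin 2 → ℝ)} (h2v : HasCompactSupport v) :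
    HasCompactSupport fun x => ∑ i, (v x i) ^ 2 :=
  h2v.comp_left (g := fun w : Fin 2 → ℝ => ∑ i, (w i) ^ 2) (by simp)

lemma comp_cd {v : (Fin 2 → ℝ) → (Fin 2 → ℝ)} (hv : ContDiff ℝ 1 v) (i : Fin 2) :
    ContDiff ℝ 1 fun x => v x i := contDiff_pi.mp hv i

lemma comp_hcs {v : (Fin 2 → ℝ) → (Fin 2 → ℝ)} (h2v : HasCompactSupport v) (i : Fin 2) :
    HasCompactSupport fun x => v x i :=
  h2v.comp_left (g := fun w : Fin 2 → ℝ => w i) rfl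

-- integrability of the gradient-square integrand
lemma DD_cont {v : (Fin 2 → ℝ) → (Fin 2 → ℝ)} (hv : ContDiff ℝ 1 v) :
    Continuous fun x => ∑ i, ∑ j, (pderiv2 (fun y => v y i) j x) ^ 2 :=
  continuous_finset_sum _ fun i _ => G_cont (comp_cd hv i)

lemma DD_hcs {v : (Fin 2 → ℝ) → (Fin 2 → ℝ)} (h2v : HasCompactSupport v) :
    HasCompactSupport fun x => ∑ i, ∑ j, (pderiv2 (fun y => v y i) j x) ^ 2 := by
  have : (fun x => ∑ i, ∑ j, (pderiv2 (fun y => v y i) j x) ^ 2) =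
      (fun x => (∑ j, (pderiv2 (fun y => v y 0) j x) ^ 2) +
        ∑ j, (pderiv2 (fun y => v y 1) j x) ^ 2) := by
    funext x; rw [Fin.sum_univ_two]
  rw [this]
  exact (G_hcs (comp_hcs h2v 0)).add (G_hcs (comp_hcs h2v 1))

-- `Q v ≤ 2 K S v * D v`
lemma claimQ {K : ℝ} (hK : 0 < K)
    (hlady : ∀ f : (Fin 2 → ℝ) → ℝ, ContDiff ℝ 1 f → HasCompactSupport f →
      ∫ x, (f x) ^ 4 ≤ K * (∫ x, (f x) ^ 2) * (∫ x, ∑ j, (pderiv2 f j x) ^ 2))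
    {v : (Fin 2 → ℝ) → (Fin 2 → ℝ)} (hv : ContDiff ℝ 1 v) (h2v : HasCompactSupport v) :
    ∫ x, (∑ i, (v x i) ^ 2) ^ 2 ≤ 2 * K * (∫ x, ∑ i, (v x i) ^ 2) *
      (∫ x, ∑ i, ∑ j, (pderiv2 (fun y => v y i) j x) ^ 2) := by
  have hvc := hv.continuous
  have hc0 := comp_cd hv 0
  have hc1 := comp_cd hv 1
  have hs0 := comp_hcs h2v 0
  have hs1 := comp_hcs h2v 1
  have hint4 : ∀ i : Fin 2, Integrable (fun x => (v x i) ^ 4) := fun i =>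
    by
      have h1 : HasCompactSupport (fun x => (v x i) ^ 4) := (comp_hcs h2v i).comp_left (g := fun t : ℝ => t ^ 4) (by simp)
      exact (((comp_cd hv i).continuous).pow 4).integrable_of_hasCompactSupport h1
  have hintS : Integrable (fun x => ∑ i, (v x i) ^ 2) :=
    (sumsq_cont hv).integrable_of_hasCompactSupport (sumsq_hcs h2v)
  have hintQ : Integrable (fun x => (∑ i, (v x i) ^ 2) ^ 2) :=
    by
      have h1 : HasCompactSupport (fun x => (∑ i, (v x i) ^ 2) ^ 2) := (sumsq_hcs h2v).comp_left (g := fun t : ℝ => t ^ 2) (by simp)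
      exact ((sumsq_cont hv).pow 2).integrable_of_hasCompactSupport h1
  have hint2 : ∀ i : Fin 2, Integrable (fun x => (v x i) ^ 2) := fun i =>
    by
      have h1 : HasCompactSupport (fun x => (v x i) ^ 2) := (comp_hcs h2v i).comp_left (g := fun t : ℝ => t ^ 2) (by simp)
      exact (((comp_cd hv i).continuous).pow 2).integrable_of_hasCompactSupport h1
  have hintG : ∀ i : Fin 2, Integrable (fun x => ∑ j, (pderiv2 (fun y => v y i) j x) ^ 2) :=
    fun i => (G_cont (comp_cd hv i)).integrable_of_hasCompactSupport (G_hcs (comp_hcs h2v i))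
  -- pointwise (a+b)^2 ≤ 2a²+2b²
  have step1 : ∫ x, (∑ i, (v x i) ^ 2) ^ 2 ≤
      2 * ∫ x, ((v x 0) ^ 4 + (v x 1) ^ 4) := by
    rw [← integral_const_mul]
    apply integral_mono hintQ (((hint4 0).add (hint4 1)).const_mul 2)
    intro x
    simp only [Fin.sum_univ_two, Pi.add_apply]
    nlinarith [sq_nonneg ((v x 0) ^ 2 - (v x 1) ^ 2)]
  have step2 : ∫ x, ((v x 0) ^ 4 + (v x 1) ^ 4) = (∫ x, (v x 0) ^ 4) + ∫ x, (v x 1) ^ 4 :=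
    integral_add (hint4 0) (hint4 1)
  -- bounds on component integrals by the full sums
  have hcompS : ∀ i : Fin 2, ∫ x, (v x i) ^ 2 ≤ ∫ x, ∑ k, (v x k) ^ 2 := by
    intro i
    apply integral_mono (hint2 i) hintS
    intro x
    exact Finset.single_le_sum (f := fun k => (v x k) ^ 2) (fun k _ => by positivity)
      (Finset.mem_univ i)
  have hcompG : ∀ i : Fin 2,
      ∫ x, ∑ j, (pderiv2 (fun y => v y i) j x) ^ 2 ≤
      ∫ x, ∑ k, ∑ j, (pderiv2 (fun y => v y k) j x) ^ 2 := by
    intro i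
    apply integral_mono (hintG i)
      ((DD_cont hv).integrable_of_hasCompactSupport (DD_hcs h2v))
    intro x
    exact Finset.single_le_sum
      (f := fun k => ∑ j, (pderiv2 (fun y => v y k) j x) ^ 2)
      (fun k _ => by positivity) (Finset.mem_univ i)
  have hSnn : 0 ≤ ∫ x, ∑ i, (v x i) ^ 2 := integral_nonneg fun x => by positivity
  have hGnn : ∀ i : Fin 2, 0 ≤ ∫ x, ∑ j, (pderiv2 (fun y => v y i) j x) ^ 2 :=
    fun i => integral_nonneg fun x => by positivity
  have h2nn : ∀ i : Fin 2, 0 ≤ ∫ x, (v x i) ^ 2 :=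
    fun i => integral_nonneg fun x => by positivity
  have hl0 := hlady _ hc0 hs0
  have hl1 := hlady _ hc1 hs1
  have hDsum : (∫ x, ∑ i, ∑ j, (pderiv2 (fun y => v y i) j x) ^ 2) =
      (∫ x, ∑ j, (pderiv2 (fun y => v y 0) j x) ^ 2) +
      (∫ x, ∑ j, (pderiv2 (fun y => v y 1) j x) ^ 2) := by
    rw [← integral_add (hintG 0) (hintG 1)]
    congr 1; funext x
    exact Fin.sum_univ_two _
  have b0 : K * (∫ x, (v x 0) ^ 2) * (∫ x, ∑ j, (pderiv2 (fun y => v y 0) j x) ^ 2) ≤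
      K * (∫ x, ∑ i, (v x i) ^ 2) * (∫ x, ∑ j, (pderiv2 (fun y => v y 0) j x) ^ 2) :=
    mul_le_mul_of_nonneg_right (mul_le_mul_of_nonneg_left (hcompS 0) hK.le) (hGnn 0)
  have b1 : K * (∫ x, (v x 1) ^ 2) * (∫ x, ∑ j, (pderiv2 (fun y => v y 1) j x) ^ 2) ≤
      K * (∫ x, ∑ i, (v x i) ^ 2) * (∫ x, ∑ j, (pderiv2 (fun y => v y 1) j x) ^ 2) :=
    mul_le_mul_of_nonneg_right (mul_le_mul_of_nonneg_left (hcompS 1) hK.le) (hGnn 1)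
  calc ∫ x, (∑ i, (v x i) ^ 2) ^ 2
      ≤ 2 * ∫ x, ((v x 0) ^ 4 + (v x 1) ^ 4) := step1
    _ = 2 * ((∫ x, (v x 0) ^ 4) + ∫ x, (v x 1) ^ 4) := by rw [step2]
    _ ≤ 2 * (K * (∫ x, ∑ i, (v x i) ^ 2) * (∫ x, ∑ j, (pderiv2 (fun y => v y 0) j x) ^ 2) +
        K * (∫ x, ∑ i, (v x i) ^ 2) * (∫ x, ∑ j, (pderiv2 (fun y => v y 1) j x) ^ 2)) := by
        have := (hl0.trans b0)
        have := (hl1.trans b1)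
        linarith
    _ = 2 * K * (∫ x, ∑ i, (v x i) ^ 2) *
        ((∫ x, ∑ j, (pderiv2 (fun y => v y 0) j x) ^ 2) +
         (∫ x, ∑ j, (pderiv2 (fun y => v y 1) j x) ^ 2)) := by ring
    _ = 2 * K * (∫ x, ∑ i, (v x i) ^ 2) *
        (∫ x, ∑ i, ∑ j, (pderiv2 (fun y => v y i) j x) ^ 2) := by rw [hDsum]

set_option maxHeartbeats 1000000 in
/-- Estimate (28) of the paper:
`|∫ C (u₂ · u)| ≤ M ‖C‖² + ε ‖∇u‖² + M ‖u₂‖² ‖∇u₂‖² ‖u‖²`. -/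
theorem estimate_C_u2_dot_u :
    ∀ ε : ℝ, 0 < ε → ∃ M : ℝ, 0 < M ∧
      ∀ (u u₂ : (Fin 2 → ℝ) → (Fin 2 → ℝ)) (C : (Fin 2 → ℝ) → ℝ),
        ContDiff ℝ 1 u → HasCompactSupport u →
        ContDiff ℝ 1 u₂ → HasCompactSupport u₂ →
        Continuous C → HasCompactSupport C →
        |∫ x, C x * (∑ i, u₂ x i * u x i)| ≤
          M * (∫ x, (C x) ^ 2) +
            ε * (∫ x, ∑ i, ∑ j, (pderiv2 (fun y => u y i) j x) ^ 2) +
            M * (∫ x, ∑ i, (u₂ x i) ^ 2) *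
              (∫ x, ∑ i, ∑ j, (pderiv2 (fun y => u₂ y i) j x) ^ 2) *
              (∫ x, ∑ i, (u x i) ^ 2) := by
  intro ε hε
  obtain ⟨K, hK, hlady⟩ := lady
  refine ⟨1 / 2 + K ^ 2 / (4 * ε) + 1, by positivity, fun u u₂ C hu h2u hu₂ h2u₂ hC h3C => ?_⟩
  set M : ℝ := 1 / 2 + K ^ 2 / (4 * ε) + 1 with hMdef
  -- abbreviations
  set IC : ℝ := ∫ x, (C x) ^ 2 with hICdef
  set S : ℝ := ∫ x, ∑ i, (u x i) ^ 2 with hSdef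
  set S₂ : ℝ := ∫ x, ∑ i, (u₂ x i) ^ 2 with hS₂def
  set D : ℝ := ∫ x, ∑ i, ∑ j, (pderiv2 (fun y => u y i) j x) ^ 2 with hDdef
  set D₂ : ℝ := ∫ x, ∑ i, ∑ j, (pderiv2 (fun y => u₂ y i) j x) ^ 2 with hD₂def
  set Q : ℝ := ∫ x, (∑ i, (u x i) ^ 2) ^ 2 with hQdef
  set Q₂ : ℝ := ∫ x, (∑ i, (u₂ x i) ^ 2) ^ 2 with hQ₂def
  set IP : ℝ := ∫ x, (∑ i, (u₂ x i) ^ 2) * (∑ i, (u x i) ^ 2) with hIPdef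
  -- continuity / integrability facts
  have hsc : Continuous fun x => ∑ i, u₂ x i * u x i :=
    continuous_finset_sum _ fun i _ =>
      ((continuous_apply i).comp hu₂.continuous).mul ((continuous_apply i).comp hu.continuous)
  have hintH : Integrable (fun x => C x * ∑ i, u₂ x i * u x i) :=
    (hC.mul hsc).integrable_of_hasCompactSupport h3C.mul_right
  have hintC2 : Integrable (fun x => (C x) ^ 2) :=
    (hC.pow 2).integrable_of_hasCompactSupport
      (show HasCompactSupport (fun x => (C x) ^ 2) from h3C.comp_left (g := fun t : ℝ => t ^ 2) (by simp))
  have hintP : Integrable (fun x => (∑ i, (u₂ x i) ^ 2) * (∑ i, (u x i) ^ 2)) :=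
    ((sumsq_cont hu₂).mul (sumsq_cont hu)).integrable_of_hasCompactSupport
      (sumsq_hcs h2u₂).mul_right
  -- nonnegativity
  have hICnn : 0 ≤ IC := integral_nonneg fun x => by positivity
  have hSnn : 0 ≤ S := integral_nonneg fun x => by positivity
  have hS₂nn : 0 ≤ S₂ := integral_nonneg fun x => by positivity
  have hDnn : 0 ≤ D := integral_nonneg fun x => by positivity
  have hD₂nn : 0 ≤ D₂ := integral_nonneg fun x => by positivity
  have hQnn : 0 ≤ Q := integral_nonneg fun x => by positivity
  have hQ₂nn : 0 ≤ Q₂ := integral_nonneg fun x => by positivity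
  have hIPnn : 0 ≤ IP := integral_nonneg fun x => by positivity
  -- Step 1 : |∫ C (u₂ · u)| ≤ 1/2 IC + 1/2 IP
  have step1 : |∫ x, C x * (∑ i, u₂ x i * u x i)| ≤ 1 / 2 * IC + 1 / 2 * IP := by
    have hptw : ∀ x, |C x * ∑ i, u₂ x i * u x i| ≤
        1 / 2 * (C x) ^ 2 + 1 / 2 * ((∑ i, (u₂ x i) ^ 2) * (∑ i, (u x i) ^ 2)) := by
      intro x
      rw [abs_le]
      constructor <;>
      · simp only [Fin.sum_univ_two]
        nlinarith [sq_nonneg (C x + (u₂ x 0 * u x 0 + u₂ x 1 * u x 1)),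
          sq_nonneg (C x - (u₂ x 0 * u x 0 + u₂ x 1 * u x 1)),
          sq_nonneg (u₂ x 0 * u x 1 - u₂ x 1 * u x 0)]
    calc |∫ x, C x * (∑ i, u₂ x i * u x i)|
        ≤ ∫ x, |C x * ∑ i, u₂ x i * u x i| := by
          exact norm_integral_le_integral_norm (fun x => C x * ∑ i, u₂ x i * u x i)
      _ ≤ ∫ x, (1 / 2 * (C x) ^ 2 +
            1 / 2 * ((∑ i, (u₂ x i) ^ 2) * (∑ i, (u x i) ^ 2))) := by
          apply integral_mono hintH.abs ((hintC2.const_mul _).add (hintP.const_mul _)) hptw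
      _ = 1 / 2 * IC + 1 / 2 * IP := by
          rw [integral_add (hintC2.const_mul _) (hintP.const_mul _),
            integral_const_mul, integral_const_mul]
  -- Step 2 : Hölder, (IP)² ≤ Q₂ * Q
  have step2 : IP ^ 2 ≤ Q₂ * Q := by
    have h3 := integral_mul_le_Lp_mul_Lq_of_nonneg
      (Real.HolderConjugate.two_two : Real.HolderConjugate 2 2)
      (ae_of_all _ fun x => by positivity : 0 ≤ᵐ[volume] fun x => ∑ i, (u₂ x i) ^ 2)
      (ae_of_all _ fun x => by positivity : 0 ≤ᵐ[volume] fun x => ∑ i, (u x i) ^ 2)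
      ((sumsq_cont hu₂).memLp_of_hasCompactSupport (sumsq_hcs h2u₂))
      ((sumsq_cont hu).memLp_of_hasCompactSupport (sumsq_hcs h2u))
    have e₂ : (∫ x, (∑ i, (u₂ x i) ^ 2) ^ (2 : ℝ)) = Q₂ := by
      apply integral_congr_ae (ae_of_all _ fun x => ?_)
      rw [show (2 : ℝ) = ((2 : ℕ) : ℝ) by norm_num, Real.rpow_natCast]
    have e : (∫ x, (∑ i, (u x i) ^ 2) ^ (2 : ℝ)) = Q := by
      apply integral_congr_ae (ae_of_all _ fun x => ?_)
      rw [show (2 : ℝ) = ((2 : ℕ) : ℝ) by norm_num, Real.rpow_natCast]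
    rw [e₂, e] at h3
    have hsq : (Q₂ ^ (1 / 2 : ℝ) * Q ^ (1 / 2 : ℝ)) ^ 2 = Q₂ * Q := by
      rw [mul_pow, ← Real.rpow_natCast (Q₂ ^ (1 / 2 : ℝ)) 2,
        ← Real.rpow_natCast (Q ^ (1 / 2 : ℝ)) 2,
        ← Real.rpow_mul hQ₂nn, ← Real.rpow_mul hQnn]
      norm_num
    calc IP ^ 2 ≤ (Q₂ ^ (1 / 2 : ℝ) * Q ^ (1 / 2 : ℝ)) ^ 2 :=
          pow_le_pow_left₀ hIPnn h3 2
      _ = Q₂ * Q := hsq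
  -- Step 3 : ladyzhenskaya bounds for Q and Q₂
  have hQb : Q ≤ 2 * K * S * D := claimQ hK hlady hu h2u
  have hQ₂b : Q₂ ≤ 2 * K * S₂ * D₂ := claimQ hK hlady hu₂ h2u₂
  -- Step 4 : Young's inequality
  have step4 : IP ≤ 2 * ε * D + K ^ 2 / (2 * ε) * (S₂ * D₂ * S) := by
    have hchain : IP ^ 2 ≤ 4 * K ^ 2 * (S₂ * D₂ * S) * D := by
      have h2b : (0:ℝ) ≤ 2 * K * S₂ * D₂ :=
        mul_nonneg (mul_nonneg (by linarith) hS₂nn) hD₂nn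
      have h1 : Q₂ * Q ≤ (2 * K * S₂ * D₂) * (2 * K * S * D) :=
        mul_le_mul hQ₂b hQb hQnn h2b
      nlinarith [step2]
    have hab : (2 * ε * D) * (K ^ 2 / (2 * ε) * (S₂ * D₂ * S)) =
        K ^ 2 * (S₂ * D₂ * S) * D := by
      field_simp
    have hann : 0 ≤ 2 * ε * D := by positivity
    have hbnn : 0 ≤ K ^ 2 / (2 * ε) * (S₂ * D₂ * S) := by positivity
    have hsum2 : IP ^ 2 ≤ (2 * ε * D + K ^ 2 / (2 * ε) * (S₂ * D₂ * S)) ^ 2 := by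
      nlinarith [sq_nonneg (2 * ε * D - K ^ 2 / (2 * ε) * (S₂ * D₂ * S))]
    calc IP = Real.sqrt (IP ^ 2) := (Real.sqrt_sq hIPnn).symm
      _ ≤ Real.sqrt ((2 * ε * D + K ^ 2 / (2 * ε) * (S₂ * D₂ * S)) ^ 2) :=
          Real.sqrt_le_sqrt hsum2
      _ = 2 * ε * D + K ^ 2 / (2 * ε) * (S₂ * D₂ * S) := Real.sqrt_sq (by positivity)
  -- assemble
  have hKW : 0 ≤ S₂ * D₂ * S := by positivity
  have hc1 : 1 / 2 * IC ≤ M * IC := by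
    apply mul_le_mul_of_nonneg_right _ hICnn
    have : 0 ≤ K ^ 2 / (4 * ε) := by positivity
    linarith
  have hc2 : K ^ 2 / (4 * ε) * (S₂ * D₂ * S) ≤ M * (S₂ * D₂ * S) := by
    apply mul_le_mul_of_nonneg_right _ hKW
    linarith
  have : M * S₂ * D₂ * S = M * (S₂ * D₂ * S) := by ring
  rw [this]
  calc |∫ x, C x * (∑ i, u₂ x i * u x i)|
      ≤ 1 / 2 * IC + 1 / 2 * IP := step1
    _ ≤ 1 / 2 * IC + 1 / 2 * (2 * ε * D + K ^ 2 / (2 * ε) * (S₂ * D₂ * S)) := by linarith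
    _ = 1 / 2 * IC + ε * D + K ^ 2 / (4 * ε) * (S₂ * D₂ * S) := by ring
    _ ≤ M * IC + ε * D + M * (S₂ * D₂ * S) := by linarith
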